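/- Let (X, X) and (Y, Y) be continuous biframe Bessel mappings for H with Bessel bounds D₁ and D₂ respectively, let m : Ω → ℂ be an essentially bounded measurable function, and let M_{m,X,Y} be the continuous biframe Bessel multiplier. Suppose α, β are real numbers with 1 − α > 0 and 1 + β > 0 such that ‖f − M_{m,X,Y} f‖ ≤ α·‖f‖ + β·‖M_{m,X,Y} f‖ for all f ∈ H. Then (X, X) is a continuous biframe for H with bounds ((1−α)/(‖m‖_∞·√D₂·(1+β)))² and D₁; that is, ((1−α)/(‖m‖_∞·√D₂·(1+β)))²·⟨f,f⟩ ≤ ∫_Ω ⟨f, X(ω)⟩⟨X(ω), f⟩ dμ(ω) ≤ D₁·⟨f,f⟩ for all f ∈ H. -/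

import Mathlib

open MeasureTheory

section AuxA
variable {A : Type*} [NormedRing A] [StarRing A] [CStarRing A] [NormedAlgebra ℂ A]
  [PartialOrder A] [StarOrderedRing A] [CompleteSpace A]



variable {A : Type*} [NormedRing A] [StarRing A] [CStarRing A] [NormedAlgebra ℂ A]
  [PartialOrder A] [StarOrderedRing A] [CompleteSpace A]

/-- `star` is `ℝ`-linear (since it is continuous and additive). -/
lemma aux_star_real_smul (r : ℝ) (x : A) : star (r • x) = r • star x := by
  have hz : ∀ (n : ℤ) (y : A), star ((n : ℝ) • y) = (n : ℝ) • star y := by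
    intro n y
    rw [Int.cast_smul_eq_zsmul ℝ n y, Int.cast_smul_eq_zsmul ℝ n (star y)]
    exact map_zsmul (starAddEquiv : A ≃+ A).toAddMonoidHom n y
  have hq : ∀ (q : ℚ) (y : A), star ((q : ℝ) • y) = (q : ℝ) • star y := by
    intro q y
    have hden : ((q.den : ℤ) : ℝ) ≠ 0 := by exact_mod_cast q.den_nz  -- check name
    apply smul_right_injective A hden
    show ((q.den : ℤ) : ℝ) • star ((q:ℝ) • y) = ((q.den : ℤ) : ℝ) • ((q:ℝ) • star y)
    rw [← hz (q.den : ℤ) ((q:ℝ) • y), smul_smul, smul_smul]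
    have hval : ((q.den : ℤ) : ℝ) * (q : ℝ) = ((q.num : ℤ) : ℝ) := by
      push_cast
      rw [mul_comm, Rat.cast_def]
      field_simp
    rw [hval, hz]
  have hclosed : IsClosed {r : ℝ | star (r • x) = r • star x} :=
    isClosed_eq (continuous_star.comp (continuous_id.smul continuous_const))
      (continuous_id.smul continuous_const)
  have hsub : Set.range ((↑) : ℚ → ℝ) ⊆ {r : ℝ | star (r • x) = r • star x} := by
    rintro _ ⟨q, rfl⟩; exact hq q x
  exact hclosed.closure_subset_iff.mpr hsub (Rat.denseRange_cast r)

/-- In a unital C*-algebra (with the star-ordered structure), `star` is automatically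
conjugate-linear over `ℂ`. -/
lemma aux_starModule : StarModule ℂ A := by
  set v : A := (Complex.I : ℂ) • (1 : A) with hv
  have hvsm : ∀ x : A, v * x = (Complex.I : ℂ) • x := by
    intro x; rw [hv, smul_mul_assoc, one_mul]
  have hvc : ∀ x : A, v * x = x * v := by
    intro x; rw [hv, smul_mul_assoc, one_mul, mul_smul_comm, mul_one]
  have hvv : v * v = -1 := by
    rw [hvsm, hv, smul_smul, Complex.I_mul_I, neg_smul, one_smul]
  set u : A := star v with hu
  have huc : ∀ x : A, u * x = x * u := by
    intro x
    calc u * x = star v * star (star x) := by rw [star_star]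
    _ = star (star x * v) := by rw [star_mul, star_star]
    _ = star (v * star x) := by rw [hvc]
    _ = x * u := by rw [star_mul, star_star]
  have huu : u * u = -1 := by
    rw [hu, ← star_mul, hvv, star_neg, star_one]
  set x : A := 1 - v * u with hx
  have hxsa : star x = x := by
    rw [hx, star_sub, star_one, star_mul, hu, star_star]
  have hxx : x * x = x + x := by
    have hvuvu : v * u * (v * u) = 1 := by
      calc v * u * (v * u) = v * (u * v) * u := by noncomm_ring
      _ = v * (v * u) * u := by rw [huc]
      _ = v * v * (u * u) := by noncomm_ring
      _ = 1 := by rw [hvv, huu]; noncomm_ring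
    rw [hx]
    calc (1 - v*u) * (1 - v*u) = 1 - v*u - v*u + v*u*(v*u) := by noncomm_ring
    _ = (1 - v*u) + (1 - v*u) := by rw [hvuvu]; noncomm_ring
  have h2x : (0:A) ≤ x + x := by
    have h := star_mul_self_nonneg x
    rwa [hxsa, hxx] at h
  have h2x' : x + x ≤ 0 := by
    have ha := star_mul_self_nonneg (v * x)
    have key : star (v * x) * (v * x) = -(x + x) := by
      have huv : u * v = 1 - x := by rw [huc, hx]; noncomm_ring
      calc star (v * x) * (v * x) = x * (u * v) * x := by
            rw [star_mul, hxsa, ← hu]; noncomm_ring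
      _ = x * (1 - x) * x := by rw [huv]
      _ = x * x - x * (x * x) := by noncomm_ring
      _ = (x + x) - x * (x + x) := by rw [hxx]
      _ = (x + x) - (x * x + x * x) := by rw [mul_add]
      _ = (x + x) - ((x + x) + (x + x)) := by rw [hxx]
      _ = -(x + x) := by abel
    rw [key, ← neg_zero] at ha
    exact le_of_neg_le_neg ha
  have hxzero : x = 0 := by
    have h0 : x + x = 0 := le_antisymm h2x' h2x
    have : (2:ℝ) • x = 0 := by rw [two_smul]; exact h0
    have := congrArg (fun y => ((2:ℝ)⁻¹) • y) this
    simpa [smul_smul] using this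
  have hvu : v * u = 1 := by
    have : (1:A) - v * u = 0 := hxzero
    linear_combination (norm := noncomm_ring) -this
  have huv : u * v = 1 := by rw [huc, hvu]
  have hunegv : u = -v := by
    have h1 : v * (u + v) = 0 := by rw [mul_add, hvu, hvv]; abel
    have h2 : u * (v * (u + v)) = u + v := by rw [← mul_assoc, huv, one_mul]
    have : u + v = 0 := by rw [← h2, h1, mul_zero]
    linear_combination (norm := noncomm_ring) this
  constructor
  intro c y
  have hcy : c • y = (c.re : ℝ) • y + (c.im : ℝ) • ((Complex.I : ℂ) • y) := by
    rw [← Complex.coe_smul, ← Complex.coe_smul, smul_smul, ← add_smul]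
    rw [Complex.re_add_im]
  have hIy : star ((Complex.I : ℂ) • y) = -((Complex.I : ℂ) • star y) := by
    rw [← hvsm y, star_mul, ← hu, hunegv, mul_neg, ← hvc, hvsm]
  have hconj : (starRingEnd ℂ) c • star y
      = (c.re : ℝ) • star y - (c.im : ℝ) • ((Complex.I : ℂ) • star y) := by
    rw [← Complex.coe_smul, ← Complex.coe_smul, smul_smul, ← sub_smul]
    congr 1
    simp [Complex.ext_iff]
  rw [hcy, star_add, aux_star_real_smul, aux_star_real_smul, hIy, Complex.star_def, hconj,
    smul_neg]
  abel


end AuxA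

section AuxB
variable {A : Type*} [CStarAlgebra A] [PartialOrder A] [StarOrderedRing A]
  {Ω : Type*} [MeasurableSpace Ω] {μ : Measure Ω}

lemma aux_smul_nonneg {t : ℝ} (ht : 0 ≤ t) {x : A} (hx : 0 ≤ x) : 0 ≤ t • x := by
  have hts : Real.sqrt t • (1:A) = star (Real.sqrt t • (1:A)) := by
    rw [star_smul, star_one, star_trivial]
  have hkey : (Real.sqrt t • (1:A)) * x * (Real.sqrt t • (1:A)) = t • x := by
    rw [smul_mul_assoc, one_mul, mul_smul_comm, mul_one, smul_smul, Real.mul_self_sqrt ht]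
  calc (0:A) ≤ star (Real.sqrt t • (1:A)) * x * (Real.sqrt t • (1:A)) :=
        star_left_conjugate_nonneg hx _
  _ = t • x := by rw [← hts, hkey]

lemma aux_smul_le_smul {t : ℝ} (ht : 0 ≤ t) {x y : A} (hxy : x ≤ y) : t • x ≤ t • y := by
  have h := aux_smul_nonneg ht (sub_nonneg.mpr hxy)
  rw [smul_sub] at h
  exact sub_nonneg.mp h

lemma aux_integral_nonneg {Ω : Type*} [MeasurableSpace Ω] {μ : Measure Ω} {g : Ω → A}
    (hg : ∀ᵐ ω ∂μ, 0 ≤ g ω) : 0 ≤ ∫ ω, g ω ∂μ := by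
  by_cases hint : Integrable g μ
  · by_contra hcon
    have hconv : Convex ℝ {a : A | 0 ≤ a} := by
      intro a ha b hb s t hs ht _
      exact add_nonneg (aux_smul_nonneg hs ha) (aux_smul_nonneg ht hb)
    obtain ⟨φ, uu, hsep, hgt⟩ :=
      geometric_hahn_banach_closed_point (s := {a : A | 0 ≤ a}) (x := ∫ ω, g ω ∂μ)
        hconv CStarAlgebra.isClosed_nonneg hcon
    have hu0 : 0 < uu := by simpa using hsep 0 le_rfl
    have hφ : ∀ a : A, 0 ≤ a → φ a ≤ 0 := by
      intro a ha
      by_contra hpos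
      push_neg at hpos
      have h1 : φ ((uu / φ a) • a) < uu :=
        hsep _ (aux_smul_nonneg (by positivity) ha)
      rw [φ.map_smul, smul_eq_mul, div_mul_cancel₀ _ (ne_of_gt hpos)] at h1
      exact lt_irrefl _ h1
    have hcomm : ∫ ω, φ (g ω) ∂μ = φ (∫ ω, g ω ∂μ) :=
      φ.integral_comp_comm hint
    have hle : ∫ ω, φ (g ω) ∂μ ≤ 0 :=
      integral_nonpos_of_ae (hg.mono fun ω hω => hφ _ hω)
    rw [hcomm] at hle
    exact absurd (lt_of_lt_of_le hgt hle) (not_lt.mpr hu0.le)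
  · rw [integral_undef hint]

lemma aux_integral_le {Ω : Type*} [MeasurableSpace Ω] {μ : Measure Ω} {g₁ g₂ : Ω → A}
    (h₁ : Integrable g₁ μ) (h₂ : Integrable g₂ μ) (hg : ∀ᵐ ω ∂μ, g₁ ω ≤ g₂ ω) :
    ∫ ω, g₁ ω ∂μ ≤ ∫ ω, g₂ ω ∂μ := by
  have := aux_integral_nonneg (g := fun ω => g₂ ω - g₁ ω)
    (hg.mono fun ω hω => sub_nonneg.mpr hω)
  rwa [integral_sub h₂ h₁, sub_nonneg] at this

lemma aux_integral_conj {Ω : Type*} [MeasurableSpace Ω] {μ : Measure Ω} {g : Ω → A}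
    (hint : Integrable g μ) (c d : A) :
    ∫ ω, c * g ω * d ∂μ = c * (∫ ω, g ω ∂μ) * d := by
  have L : A →L[ℝ] A :=
    (ContinuousLinearMap.mul ℝ A c).comp ((ContinuousLinearMap.mul ℝ A).flip d)
  have hLdef : ∀ x : A, ((ContinuousLinearMap.mul ℝ A c).comp
      ((ContinuousLinearMap.mul ℝ A).flip d)) x = c * (x * d) := fun x => rfl
  have := ((ContinuousLinearMap.mul ℝ A c).comp
      ((ContinuousLinearMap.mul ℝ A).flip d)).integral_comp_comm hint
  simp only [hLdef] at this
  simp only [← mul_assoc] at this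
  exact this

lemma aux_integral_mul_left {g : Ω → A} (hint : Integrable g μ) (c : A) :
    ∫ ω, c * g ω ∂μ = c * ∫ ω, g ω ∂μ := by
  have := aux_integral_conj hint c 1
  simpa only [mul_one] using this

lemma aux_integral_mul_right {g : Ω → A} (hint : Integrable g μ) (d : A) :
    ∫ ω, g ω * d ∂μ = (∫ ω, g ω ∂μ) * d := by
  have := aux_integral_conj hint 1 d
  simpa only [one_mul] using this

lemma aux_integral_star (g : Ω → A) :
    ∫ ω, star (g ω) ∂μ = star (∫ ω, g ω ∂μ) :=
  (starL' ℝ (A := A)).integral_comp_comm g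

/-- C*-algebra–valued Cauchy–Schwarz inequality for integrals. -/
lemma aux_cauchy_schwarz {h k : Ω → A}
    (Hhh : Integrable (fun ω => h ω * star (h ω)) μ)
    (Hkk : Integrable (fun ω => k ω * star (k ω)) μ)
    (Hhk : Integrable (fun ω => h ω * star (k ω)) μ) :
    ‖∫ ω, h ω * star (k ω) ∂μ‖ ^ 2 ≤
      ‖∫ ω, h ω * star (h ω) ∂μ‖ * ‖∫ ω, k ω * star (k ω) ∂μ‖ := by
  set A0 := ∫ ω, h ω * star (h ω) ∂μ with hA0def
  set B := ∫ ω, k ω * star (k ω) ∂μ with hBdef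
  set v := ∫ ω, h ω * star (k ω) ∂μ with hvdef
  have hA0 : 0 ≤ A0 := aux_integral_nonneg (Filter.Eventually.of_forall
    fun ω => mul_star_self_nonneg _)
  have hB : 0 ≤ B := aux_integral_nonneg (Filter.Eventually.of_forall
    fun ω => mul_star_self_nonneg _)
  have hA0sa : IsSelfAdjoint A0 := IsSelfAdjoint.of_nonneg hA0
  have hsvv : (0:A) ≤ star v * v := star_mul_self_nonneg v
  have Hkh : Integrable (fun ω => k ω * star (h ω)) μ := by
    have := ((starL' ℝ (A := A)) : A →L[ℝ] A).integrable_comp Hhk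
    simpa only [ContinuousLinearEquiv.coe_coe, starL'_apply, star_mul, star_star] using this
  have hw : ∫ ω, k ω * star (h ω) ∂μ = star v := by
    rw [hvdef, ← aux_integral_star]
    congr 1
    funext ω
    rw [star_mul, star_star]
  -- the basic positivity statement
  have hE : ∀ t : ℝ, ((2*t) • (star v * v) : A) ≤ (t^2 * ‖A0‖) • (star v * v) + B := by
    intro t
    set c : A := t • star v with hcdef
    have hstarc : star c = t • v := by
      rw [hcdef, star_smul, star_trivial, star_star]
    have hpt : ∀ ω, (c * h ω - k ω) * star (c * h ω - k ω)
        = c * (h ω * star (h ω)) * star c - c * (h ω * star (k ω))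
          - (k ω * star (h ω)) * star c + k ω * star (k ω) := by
      intro ω
      rw [star_sub, star_mul]
      noncomm_ring
    have I1 : Integrable (fun ω => c * (h ω * star (h ω)) * star c) μ :=
      (Hhh.const_mul c).mul_const (star c)
    have I2 : Integrable (fun ω => c * (h ω * star (k ω))) μ := Hhk.const_mul c
    have I3 : Integrable (fun ω => (k ω * star (h ω)) * star c) μ := Hkh.mul_const (star c)
    have I12 : Integrable (fun ω => c * (h ω * star (h ω)) * star c
        - c * (h ω * star (k ω))) μ := I1.sub I2
    have I123 : Integrable (fun ω => c * (h ω * star (h ω)) * star c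
        - c * (h ω * star (k ω)) - (k ω * star (h ω)) * star c) μ := I12.sub I3
    have hpos : (0:A) ≤ ∫ ω, (c * h ω - k ω) * star (c * h ω - k ω) ∂μ :=
      aux_integral_nonneg (Filter.Eventually.of_forall fun ω => mul_star_self_nonneg _)
    have hexp : ∫ ω, (c * h ω - k ω) * star (c * h ω - k ω) ∂μ
        = c * A0 * star c - c * v - star v * star c + B := by
      simp only [hpt]
      rw [integral_add I123 Hkk, integral_sub I12 I3, integral_sub I1 I2,
        aux_integral_conj Hhh c (star c), aux_integral_mul_left Hhk c,
        aux_integral_mul_right Hkh (star c), hw]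
    rw [hexp] at hpos
    have hsub1 : c * A0 * star c = t^2 • (star v * A0 * v) := by
      rw [hcdef, hstarc, smul_mul_assoc, smul_mul_smul_comm, ← sq]
    have hsub2 : c * v = t • (star v * v) := by rw [hcdef, smul_mul_assoc]
    have hsub3 : star v * star c = t • (star v * v) := by rw [hstarc, mul_smul_comm]
    rw [hsub1, hsub2, hsub3] at hpos
    have hconj : t^2 • (star v * A0 * v) ≤ (t^2 * ‖A0‖) • (star v * v) := by
      calc t^2 • (star v * A0 * v) ≤ t^2 • (‖A0‖ • (star v * v)) :=
            aux_smul_le_smul (sq_nonneg t) (CStarAlgebra.star_left_conjugate_le_norm_smul hA0sa)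
      _ = (t^2 * ‖A0‖) • (star v * v) := by rw [smul_smul]
    have heq : t^2 • (star v * A0 * v) - t • (star v * v) - t • (star v * v) + B
        = (t^2 • (star v * A0 * v) + B) - (t • (star v * v) + t • (star v * v)) := by abel
    rw [heq] at hpos
    have h1 : t • (star v * v) + t • (star v * v) ≤ t^2 • (star v * A0 * v) + B :=
      sub_nonneg.mp hpos
    calc (2*t) • (star v * v) = t • (star v * v) + t • (star v * v) := by
          rw [← add_smul]; ring_nf
    _ ≤ t^2 • (star v * A0 * v) + B := h1
    _ ≤ (t^2 * ‖A0‖) • (star v * v) + B := add_le_add hconj le_rfl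
  have hnorm_svv : ‖star v * v‖ = ‖v‖ ^ 2 := by
    rw [CStarRing.norm_star_mul_self, sq]
  by_cases hA0n : ‖A0‖ = 0
  · -- then `v = 0`
    have hv0 : ‖v‖ ^ 2 = 0 := by
      by_contra hne
      have hpos : 0 < ‖v‖ ^ 2 := lt_of_le_of_ne (by positivity) (Ne.symm hne)
      set t : ℝ := (‖B‖ + 1) / (2 * ‖v‖ ^ 2) with htdef
      have ht : 0 < t := by positivity
      have hEt := hE t
      rw [hA0n, mul_zero, zero_smul, zero_add] at hEt
      have hle : ‖(2*t) • (star v * v)‖ ≤ ‖B‖ :=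
        CStarAlgebra.norm_le_norm_of_nonneg_of_le (aux_smul_nonneg (by positivity) hsvv) hEt
      rw [norm_smul, Real.norm_eq_abs, abs_of_pos (by positivity), hnorm_svv] at hle
      rw [htdef] at hle
      have : 2 * ((‖B‖ + 1) / (2 * ‖v‖ ^ 2)) * ‖v‖ ^ 2 = ‖B‖ + 1 := by
        field_simp
        ring
        exact mul_inv_cancel₀ (fun h => hne (by simp [h]))
      rw [this] at hle
      linarith
    rw [hA0n, zero_mul]
    nlinarith [hv0]
  · have hA0pos : 0 < ‖A0‖ := lt_of_le_of_ne (norm_nonneg _) (Ne.symm hA0n)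
    have hEt := hE (1 / ‖A0‖)
    have hcoeff : (1 / ‖A0‖)^2 * ‖A0‖ = 1 / ‖A0‖ := by
      field_simp
    rw [hcoeff] at hEt
    -- (2/‖A0‖) • svv ≤ (1/‖A0‖) • svv + B  ⟹  (1/‖A0‖) • svv ≤ B
    have h2 : (2 * (1/‖A0‖)) • (star v * v)
        = (1/‖A0‖) • (star v * v) + (1/‖A0‖) • (star v * v) := by
      rw [← add_smul]; ring_nf
    rw [h2] at hEt
    have h3 : (1/‖A0‖) • (star v * v) ≤ B := by
      have := sub_le_sub_right hEt ((1/‖A0‖) • (star v * v))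
      simpa using this
    have h4 : star v * v ≤ ‖A0‖ • B := by
      have := aux_smul_le_smul hA0pos.le h3
      rwa [smul_smul, mul_one_div, div_self hA0n, one_smul] at this
    have h5 : ‖star v * v‖ ≤ ‖A0‖ * ‖B‖ := by
      have := CStarAlgebra.norm_le_norm_of_nonneg_of_le hsvv h4
      rwa [norm_smul, Real.norm_eq_abs, abs_of_pos hA0pos] at this
    rw [hnorm_svv] at h5
    exact h5

/-- If `c‖a p a‖ ≤ ‖a q a‖` for every selfadjoint `a`, with `p, q ≥ 0`, then `c • p ≤ q`. -/
lemma aux_order {p q : A} (hp : 0 ≤ p) (hq : 0 ≤ q) {c : ℝ} (hc : 0 ≤ c)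
    (key : ∀ a : A, IsSelfAdjoint a → c * ‖a * p * a‖ ≤ ‖a * q * a‖) :
    c • p ≤ q := by
  have hone : (0:A) ≤ 1 := by simpa using star_mul_self_nonneg (1 : A)
  -- reduce to the approximate statement
  have happrox : ∀ ε : ℝ, 0 < ε → c • p ≤ q + ε • 1 := by
    intro ε hε
    have hqsa : IsSelfAdjoint q := IsSelfAdjoint.of_nonneg hq
    have hspec : ∀ x ∈ spectrum ℝ q, 0 ≤ x := fun x hx =>
      spectrum_nonneg_of_nonneg hq hx
    set f : ℝ → ℝ := fun t => (Real.sqrt (t + ε))⁻¹ with hfdef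
    set g : ℝ → ℝ := fun t => Real.sqrt (t + ε) with hgdef
    have hgc : ContinuousOn g (spectrum ℝ q) :=
      (Real.continuous_sqrt.comp (continuous_id.add continuous_const)).continuousOn
    have hfc : ContinuousOn f (spectrum ℝ q) := by
      apply ContinuousOn.inv₀ hgc
      intro x hx
      have : 0 < x + ε := by linarith [hspec x hx]
      exact ne_of_gt (Real.sqrt_pos.mpr this)
    set a : A := cfc f q with hadef
    set b : A := cfc g q with hbdef
    have hasa : IsSelfAdjoint a := cfc_predicate f q
    have hbsa : IsSelfAdjoint b := cfc_predicate g q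
    have hfg : ∀ x ∈ spectrum ℝ q, f x * g x = 1 := by
      intro x hx
      have hxε : 0 < x + ε := by linarith [hspec x hx]
      rw [hfdef, hgdef]
      exact inv_mul_cancel₀ (ne_of_gt (Real.sqrt_pos.mpr hxε))
    have hab : a * b = 1 := by
      have h1 : cfc (fun x => f x * g x) q = cfc (fun _ : ℝ => (1:ℝ)) q := cfc_congr hfg
      rw [hadef, hbdef, ← cfc_mul f g q hfc hgc, h1, cfc_const_one ℝ q]
    have hba : b * a = 1 := by
      have h1 : cfc (fun x => g x * f x) q = cfc (fun _ : ℝ => (1:ℝ)) q :=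
        cfc_congr (fun x hx => by rw [mul_comm]; exact hfg x hx)
      rw [hbdef, hadef, ← cfc_mul g f q hgc hfc, h1, cfc_const_one ℝ q]
    -- a * q * a ≤ 1
    have haqa : a * q * a ≤ 1 := by
      have h1 : a * q * a = cfc (fun x => f x * (x * f x)) q := by
        rw [cfc_mul f (fun x => x * f x) q hfc (continuous_id'.continuousOn.mul hfc),
          cfc_mul (fun x : ℝ => x) f q continuous_id'.continuousOn hfc, cfc_id' ℝ q, ← mul_assoc]
      have h2 : cfc (fun x => f x * (x * f x)) q ≤ cfc (fun _ : ℝ => (1:ℝ)) q := by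
        apply cfc_mono ?_ (hfc.mul (continuous_id'.continuousOn.mul hfc)) continuousOn_const
        intro x hx
        have hx0 := hspec x hx
        have hxε : 0 < x + ε := by linarith
        have hfx : f x * (x * f x) = x * ((x + ε))⁻¹ := by
          rw [hfdef]
          simp only []
          rw [show (Real.sqrt (x + ε))⁻¹ * (x * (Real.sqrt (x + ε))⁻¹)
              = x * ((Real.sqrt (x + ε)) * (Real.sqrt (x + ε)))⁻¹ by
            rw [mul_inv]; ring]
          rw [Real.mul_self_sqrt hxε.le]
        show f x * (x * f x) ≤ 1
        rw [hfx, ← div_eq_mul_inv]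
        exact div_le_one_of_le₀ (by linarith) hxε.le
      rw [h1]
      calc cfc (fun x => f x * (x * f x)) q ≤ cfc (fun _ : ℝ => (1:ℝ)) q := h2
      _ = 1 := cfc_const_one ℝ q
    have hapa : 0 ≤ a * p * a := by
      have := star_left_conjugate_nonneg hp a; rwa [hasa.star_eq] at this
    have haqa_n : 0 ≤ a * q * a := by
      have := star_left_conjugate_nonneg hq a; rwa [hasa.star_eq] at this
    have hnorm1 : ‖a * q * a‖ ≤ 1 :=
      (CStarAlgebra.norm_le_one_iff_of_nonneg (a * q * a) haqa_n).mpr haqa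
    have hkey := key a hasa
    have hx1 : c • (a * p * a) ≤ 1 := by
      have hle1 : c * ‖a * p * a‖ ≤ 1 := le_trans hkey hnorm1
      calc c • (a * p * a) ≤ c • (‖a * p * a‖ • 1) := by
            apply aux_smul_le_smul hc
            have := IsSelfAdjoint.le_algebraMap_norm_self (IsSelfAdjoint.of_nonneg hapa)
            rwa [Algebra.algebraMap_eq_smul_one] at this
      _ = (c * ‖a * p * a‖) • 1 := (smul_smul c _ 1)
      _ ≤ 1 := by
            have hnn := aux_smul_nonneg (sub_nonneg.mpr hle1) hone
            have heq : (1:A) - (c * ‖a * p * a‖) • 1 = (1 - c * ‖a * p * a‖) • (1:A) := by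
              rw [sub_smul, one_smul]
            rw [← sub_nonneg, heq]
            exact hnn
    have hconj := star_left_conjugate_le_conjugate hx1 b
    rw [hbsa.star_eq] at hconj
    have hL : b * (c • (a * p * a)) * b = c • p := by
      rw [mul_smul_comm, smul_mul_assoc]
      congr 1
      calc b * (a * p * a) * b = (b * a) * p * (a * b) := by noncomm_ring
      _ = p := by rw [hba, hab, one_mul, mul_one]
    have hR : b * 1 * b = q + ε • 1 := by
      rw [mul_one, hbdef, ← cfc_mul g g q hgc hgc]
      have h1 : cfc (fun x => g x * g x) q = cfc (fun x : ℝ => x + ε) q :=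
        cfc_congr (fun x hx => by rw [hgdef]; exact Real.mul_self_sqrt (by linarith [hspec x hx]))
      rw [h1, cfc_add_const ε (fun x : ℝ => x) q continuous_id'.continuousOn hqsa, cfc_id' ℝ q,
        Algebra.algebraMap_eq_smul_one]
    rw [hL, hR] at hconj
    exact hconj
  -- pass to the limit ε → 0⁺
  have hlim : Filter.Tendsto (fun ε : ℝ => q + ε • (1:A)) (nhdsWithin 0 (Set.Ioi 0)) (nhds q) := by
    have : Filter.Tendsto (fun ε : ℝ => q + ε • (1:A)) (nhds 0) (nhds (q + (0:ℝ) • 1)) :=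
      (tendsto_const_nhds.add ((continuous_id.smul continuous_const).tendsto 0))
    rw [zero_smul, add_zero] at this
    exact this.mono_left nhdsWithin_le_nhds
  exact ge_of_tendsto hlim (Filter.eventually_of_mem self_mem_nhdsWithin
    fun ε hε => happrox ε hε)


end AuxB

/-- If `‖f − M_{m,X,Y} f‖ ≤ α‖f‖ + β‖M_{m,X,Y} f‖` for all `f`, with
`1 − α > 0` and `1 + β > 0`, then `(X, X)` is a continuous biframe with bounds
`((1−α)/(‖m‖_∞·√D₂·(1+β)))²` and `D₁`. -/
theorem biframe_of_multiplier_perturbation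
    {𝒜 H Ω : Type*}
    -- `𝒜` is a unital C*-algebra
    [NormedRing 𝒜] [StarRing 𝒜] [CStarRing 𝒜] [NormedAlgebra ℂ 𝒜] [CompleteSpace 𝒜]
    [PartialOrder 𝒜] [StarOrderedRing 𝒜]
    -- `H` is a Hilbert C*-module over `𝒜`
    [NormedAddCommGroup H] [NormedSpace ℝ H] [CompleteSpace H] [Module 𝒜 H]
    (inn : H → H → 𝒜)
    (inn_add_left : ∀ x y z : H, inn (x + y) z = inn x z + inn y z)
    (inn_smul_left : ∀ (a : 𝒜) (x z : H), inn (a • x) z = a * inn x z)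
    (inn_conj_symm : ∀ x y : H, inn x y = star (inn y x))
    (inn_nonneg : ∀ x : H, 0 ≤ inn x x)
    (inn_definite : ∀ x : H, inn x x = 0 → x = 0)
    (hnorm : ∀ x : H, ‖x‖ = Real.sqrt ‖inn x x‖)
    -- `(Ω, μ)` is a measure space
    [MeasurableSpace Ω] (μ : Measure Ω)
    -- `X, Y : Ω → H` are weakly measurable
    (X Y : Ω → H)
    (hXw : ∀ f : H, AEStronglyMeasurable (fun ω => inn f (X ω)) μ)
    (hYw : ∀ f : H, AEStronglyMeasurable (fun ω => inn f (Y ω)) μ)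
    -- `(X, X)` and `(Y, Y)` are continuous biframe Bessel mappings with bounds `D₁, D₂`
    (D₁ D₂ : ℝ) (hD₁ : 0 < D₁) (hD₂ : 0 < D₂)
    (hXBessel : ∀ f : H, ∫ ω, inn f (X ω) * inn (X ω) f ∂μ ≤ D₁ • inn f f)
    (hYBessel : ∀ f : H, ∫ ω, inn f (Y ω) * inn (Y ω) f ∂μ ≤ D₂ • inn f f)
    -- `m : Ω → ℂ` is an essentially bounded measurable function
    (m : Ω → ℂ) (hm : AEStronglyMeasurable m μ) (hmbd : eLpNormEssSup m μ ≠ ⊤)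
    -- all relevant integrands are Bochner integrable
    (hprodX : ∀ f : H, Integrable (fun ω => inn f (X ω) * inn (X ω) f) μ)
    (hprodY : ∀ f : H, Integrable (fun ω => inn f (Y ω) * inn (Y ω) f) μ)
    (hmint : ∀ f g : H, Integrable (fun ω => m ω • (inn f (X ω) * inn (Y ω) g)) μ)
    -- the continuous biframe Bessel multiplier `M_{m,X,Y}` (weakly defined)
    (M : H → H)
    (hM : ∀ f g : H, inn (M f) g = ∫ ω, m ω • (inn f (X ω) * inn (Y ω) g) ∂μ)
    (α β : ℝ) (hα : 0 < 1 - α) (hβ : 0 < 1 + β)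
    (hpert : ∀ f : H, ‖f - M f‖ ≤ α * ‖f‖ + β * ‖M f‖) :
    ∀ f : H,
      (((1 - α) / ((eLpNormEssSup m μ).toReal * Real.sqrt D₂ * (1 + β))) ^ 2) • inn f f ≤
        ∫ ω, inn f (X ω) * inn (X ω) f ∂μ ∧
      ∫ ω, inn f (X ω) * inn (X ω) f ∂μ ≤ D₁ • inn f f := by
  letI hsm : StarModule ℂ 𝒜 := aux_starModule
  letI : CStarAlgebra 𝒜 :=
    { ‹NormedRing 𝒜›, ‹StarRing 𝒜›, ‹CompleteSpace 𝒜›, ‹CStarRing 𝒜›, ‹NormedAlgebra ℂ 𝒜›,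
      hsm with }
  -- basic facts
  have hPpos : ∀ (g : H) (ω : Ω), (0:𝒜) ≤ inn g (X ω) * inn (X ω) g := by
    intro g ω
    rw [inn_conj_symm (X ω) g]
    exact mul_star_self_nonneg _
  have hΦpos : ∀ g : H, (0:𝒜) ≤ ∫ ω, inn g (X ω) * inn (X ω) g ∂μ := fun g =>
    aux_integral_nonneg (Filter.Eventually.of_forall fun ω => hPpos g ω)
  have hng : ∀ g : H, ‖inn g g‖ = ‖g‖ ^ 2 := by
    intro g
    rw [hnorm g, Real.sq_sqrt (norm_nonneg _)]
  intro f
  refine ⟨?_, hXBessel f⟩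
  set K : ℝ := (eLpNormEssSup m μ).toReal with hKdef
  have hK0 : 0 ≤ K := ENNReal.toReal_nonneg
  by_cases hK : K = 0
  · rw [hK]
    simp only [zero_mul, div_zero, ne_eq, OfNat.ofNat_ne_zero, not_false_eq_true, zero_pow,
      zero_smul]
    exact hΦpos f
  have hKpos : 0 < K := lt_of_le_of_ne hK0 (Ne.symm hK)
  have hbdd_ae : ∀ᵐ ω ∂μ, ‖m ω‖ ≤ K := by
    filter_upwards [ae_le_eLpNormEssSup (f := m) (μ := μ)] with ω hω
    have h2 := ENNReal.toReal_mono hmbd hω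
    simpa using h2
  -- Step 1: (1-α)‖g‖ ≤ (1+β)‖M g‖
  have step1 : ∀ g : H, (1 - α) * ‖g‖ ≤ (1 + β) * ‖M g‖ := by
    intro g
    have h1 : ‖g‖ ≤ ‖g - M g‖ + ‖M g‖ := by
      calc ‖g‖ = ‖(g - M g) + M g‖ := by rw [sub_add_cancel]
      _ ≤ ‖g - M g‖ + ‖M g‖ := norm_add_le _ _
    have h2 := hpert g
    nlinarith [norm_nonneg (M g), norm_nonneg g]
  -- Step 2 : ‖M g‖² ≤ K² D₂ ‖Φ g‖
  have step2 : ∀ g : H, ‖M g‖ ^ 2 ≤ K ^ 2 * D₂ * ‖∫ ω, inn g (X ω) * inn (X ω) g ∂μ‖ := by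
    intro g
    set hh : Ω → 𝒜 := fun ω => m ω • inn g (X ω) with hhdef
    set kk : Ω → 𝒜 := fun ω => inn (M g) (Y ω) with kkdef
    have hhsh : ∀ ω, hh ω * star (hh ω) = (‖m ω‖ ^ 2) • (inn g (X ω) * inn (X ω) g) := by
      intro ω
      rw [hhdef]
      simp only []
      rw [star_smul, smul_mul_assoc, mul_smul_comm, smul_smul]
      rw [show star (m ω) = (starRingEnd ℂ) (m ω) from rfl, Complex.mul_conj]
      rw [inn_conj_symm (X ω) g]
      rw [Complex.coe_smul, Complex.normSq_eq_norm_sq]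
    have hmeas2 : AEStronglyMeasurable (fun ω => ‖m ω‖ ^ 2) μ := by
      have h2 := hm.norm.mul hm.norm
      exact h2.congr (Filter.Eventually.of_forall fun ω => by simp [sq])
    have Hhh : Integrable (fun ω => hh ω * star (hh ω)) μ := by
      have hφ : MemLp (fun ω => (‖m ω‖ ^ 2 : ℝ)) ⊤ μ := by
        apply memLp_top_of_bound hmeas2 (K ^ 2)
        filter_upwards [hbdd_ae] with ω hω
        rw [Real.norm_eq_abs, abs_of_nonneg (by positivity)]
        exact pow_le_pow_left₀ (norm_nonneg _) hω 2
      have h2 := Integrable.smul_of_top_right (hprodX g) hφ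
      exact h2.congr (Filter.Eventually.of_forall fun ω => (hhsh ω).symm)
    have hksk : ∀ ω, kk ω * star (kk ω) = inn (M g) (Y ω) * inn (Y ω) (M g) := by
      intro ω
      rw [inn_conj_symm (Y ω) (M g)]
    have Hkk : Integrable (fun ω => kk ω * star (kk ω)) μ :=
      (hprodY (M g)).congr (Filter.Eventually.of_forall fun ω => (hksk ω).symm)
    have hhsk : ∀ ω, hh ω * star (kk ω) = m ω • (inn g (X ω) * inn (Y ω) (M g)) := by
      intro ω
      rw [hhdef, kkdef]
      simp only []
      rw [inn_conj_symm (Y ω) (M g), smul_mul_assoc]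
    have Hhk : Integrable (fun ω => hh ω * star (kk ω)) μ :=
      (hmint g (M g)).congr (Filter.Eventually.of_forall fun ω => (hhsk ω).symm)
    -- identify `inn (M g) (M g)` with `∫ hh ⬝ kk*`
    have hv : inn (M g) (M g) = ∫ ω, hh ω * star (kk ω) ∂μ := by
      rw [hM g (M g)]
      congr 1
      funext ω
      rw [hhsk ω]
    -- Cauchy–Schwarz
    have hCS := aux_cauchy_schwarz Hhh Hkk Hhk
    rw [← hv] at hCS
    -- bound ‖∫ hh hh*‖
    have hA_le : ‖∫ ω, hh ω * star (hh ω) ∂μ‖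
        ≤ K ^ 2 * ‖∫ ω, inn g (X ω) * inn (X ω) g ∂μ‖ := by
      have hmono : ∫ ω, hh ω * star (hh ω) ∂μ
          ≤ K ^ 2 • ∫ ω, inn g (X ω) * inn (X ω) g ∂μ := by
        rw [← integral_smul]
        apply aux_integral_le Hhh ((hprodX g).smul (K ^ 2))
        filter_upwards [hbdd_ae] with ω hω
        rw [hhsh ω]
        have hdiff : (0:𝒜) ≤ (K ^ 2 - ‖m ω‖ ^ 2) • (inn g (X ω) * inn (X ω) g) :=
          aux_smul_nonneg (by nlinarith [norm_nonneg (m ω)]) (hPpos g ω)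
        rw [sub_smul] at hdiff
        exact sub_nonneg.mp hdiff
      have h0 : (0:𝒜) ≤ ∫ ω, hh ω * star (hh ω) ∂μ :=
        aux_integral_nonneg (Filter.Eventually.of_forall fun ω => mul_star_self_nonneg _)
      have h2 := CStarAlgebra.norm_le_norm_of_nonneg_of_le h0 hmono
      rwa [norm_smul, Real.norm_eq_abs, abs_of_nonneg (by positivity)] at h2
    -- bound ‖∫ kk kk*‖
    have hB_le : ‖∫ ω, kk ω * star (kk ω) ∂μ‖ ≤ D₂ * ‖M g‖ ^ 2 := by
      have heq : ∫ ω, kk ω * star (kk ω) ∂μ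
          = ∫ ω, inn (M g) (Y ω) * inn (Y ω) (M g) ∂μ := by
        congr 1; funext ω; exact hksk ω
      have h0 : (0:𝒜) ≤ ∫ ω, kk ω * star (kk ω) ∂μ :=
        aux_integral_nonneg (Filter.Eventually.of_forall fun ω => mul_star_self_nonneg _)
      have hmono : ∫ ω, kk ω * star (kk ω) ∂μ ≤ D₂ • inn (M g) (M g) := by
        rw [heq]; exact hYBessel (M g)
      have h2 := CStarAlgebra.norm_le_norm_of_nonneg_of_le h0 hmono
      rwa [norm_smul, Real.norm_eq_abs, abs_of_pos hD₂, hng (M g)] at h2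
    have hvnorm : ‖inn (M g) (M g)‖ = ‖M g‖ ^ 2 := hng (M g)
    rw [hvnorm] at hCS
    -- combine
    by_cases hMg0 : ‖M g‖ = 0
    · rw [hMg0]
      have : (0:ℝ) ≤ K ^ 2 * D₂ * ‖∫ ω, inn g (X ω) * inn (X ω) g ∂μ‖ := by positivity
      nlinarith
    · have hMgpos : 0 < ‖M g‖ := lt_of_le_of_ne (norm_nonneg _) (Ne.symm hMg0)
      have hchain : (‖M g‖ ^ 2) ^ 2
          ≤ (K ^ 2 * ‖∫ ω, inn g (X ω) * inn (X ω) g ∂μ‖) * (D₂ * ‖M g‖ ^ 2) := by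
        calc (‖M g‖ ^ 2) ^ 2 ≤ ‖∫ ω, hh ω * star (hh ω) ∂μ‖ * ‖∫ ω, kk ω * star (kk ω) ∂μ‖ :=
              hCS
        _ ≤ (K ^ 2 * ‖∫ ω, inn g (X ω) * inn (X ω) g ∂μ‖) * (D₂ * ‖M g‖ ^ 2) := by
            apply mul_le_mul hA_le hB_le (norm_nonneg _) (by positivity)
      have hs : 0 < ‖M g‖ ^ 2 := by positivity
      apply le_of_mul_le_mul_right _ hs
      calc ‖M g‖ ^ 2 * ‖M g‖ ^ 2 = (‖M g‖ ^ 2) ^ 2 := (sq _).symm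
      _ ≤ (K ^ 2 * ‖∫ ω, inn g (X ω) * inn (X ω) g ∂μ‖) * (D₂ * ‖M g‖ ^ 2) := hchain
      _ = K ^ 2 * D₂ * ‖∫ ω, inn g (X ω) * inn (X ω) g ∂μ‖ * ‖M g‖ ^ 2 := by ring
  -- Step 3 : the scalar lower bound for every `g`
  set c : ℝ := ((1 - α) / (K * Real.sqrt D₂ * (1 + β))) ^ 2 with hcdef
  have step3 : ∀ g : H, c * ‖inn g g‖ ≤ ‖∫ ω, inn g (X ω) * inn (X ω) g ∂μ‖ := by
    intro g
    have h1 := step1 g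
    have h2 := step2 g
    have hsq : Real.sqrt D₂ ^ 2 = D₂ := Real.sq_sqrt hD₂.le
    have hden : 0 < (K * Real.sqrt D₂ * (1 + β)) ^ 2 := by
      have : 0 < Real.sqrt D₂ := Real.sqrt_pos.mpr hD₂
      positivity
    rw [hcdef, div_pow, div_mul_eq_mul_div, div_le_iff₀ hden]
    rw [hng g]
    have hexp : (K * Real.sqrt D₂ * (1 + β)) ^ 2 = K ^ 2 * D₂ * (1 + β) ^ 2 := by
      rw [mul_pow, mul_pow, hsq]
    rw [hexp]
    have hsq1 : (1 - α) ^ 2 * ‖g‖ ^ 2 ≤ (1 + β) ^ 2 * ‖M g‖ ^ 2 := by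
      have h5 := mul_self_le_mul_self (mul_nonneg hα.le (norm_nonneg g)) h1
      calc (1 - α) ^ 2 * ‖g‖ ^ 2 = ((1 - α) * ‖g‖) * ((1 - α) * ‖g‖) := by ring
      _ ≤ ((1 + β) * ‖M g‖) * ((1 + β) * ‖M g‖) := h5
      _ = (1 + β) ^ 2 * ‖M g‖ ^ 2 := by ring
    have h4 : (1 + β) ^ 2 * ‖M g‖ ^ 2
        ≤ (1 + β) ^ 2 * (K ^ 2 * D₂ * ‖∫ ω, inn g (X ω) * inn (X ω) g ∂μ‖) :=
      mul_le_mul_of_nonneg_left h2 (by positivity)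
    calc (1 - α) ^ 2 * ‖g‖ ^ 2 ≤ (1 + β) ^ 2 * ‖M g‖ ^ 2 := hsq1
    _ ≤ (1 + β) ^ 2 * (K ^ 2 * D₂ * ‖∫ ω, inn g (X ω) * inn (X ω) g ∂μ‖) := h4
    _ = ‖∫ ω, inn g (X ω) * inn (X ω) g ∂μ‖ * (K ^ 2 * D₂ * (1 + β) ^ 2) := by ring
  -- Step 4 : transfer to the order on 𝒜
  have key : ∀ a : 𝒜, IsSelfAdjoint a →
      c * ‖a * inn f f * a‖ ≤ ‖a * (∫ ω, inn f (X ω) * inn (X ω) f ∂μ) * a‖ := by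
    intro a ha
    have hinnf_sa : star (inn f f) = inn f f := (inn_conj_symm f f).symm
    have hg_inn : inn (a • f) (a • f) = a * inn f f * a := by
      rw [inn_smul_left, inn_conj_symm f (a • f), inn_smul_left, star_mul,
        hinnf_sa, ha.star_eq, ← mul_assoc]
    have hpt : ∀ ω, inn (a • f) (X ω) * inn (X ω) (a • f)
        = a * (inn f (X ω) * inn (X ω) f) * a := by
      intro ω
      rw [inn_smul_left, inn_conj_symm (X ω) (a • f), inn_smul_left, star_mul,
        ← inn_conj_symm (X ω) f, ha.star_eq]
      noncomm_ring
    have hΦg : ∫ ω, inn (a • f) (X ω) * inn (X ω) (a • f) ∂μ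
        = a * (∫ ω, inn f (X ω) * inn (X ω) f ∂μ) * a := by
      rw [show (fun ω => inn (a • f) (X ω) * inn (X ω) (a • f))
          = fun ω => a * (inn f (X ω) * inn (X ω) f) * a from funext hpt]
      exact aux_integral_conj (hprodX f) a a
    have h3 := step3 (a • f)
    rwa [hg_inn, hΦg] at h3
  exact aux_order (inn_nonneg f) (hΦpos f) (sq_nonneg _) key
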